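/- arXiv:1702.08859 — 6 statements merged into one kernel-verified Lean document; each statement's English description precedes it below -/
import Mathlib

section
/- Let φ : ℝ → ℝ be smooth with 0 ≤ φ(t) ≤ 1 for all t, φ'(t) ≤ 0 for all t, |φ'(t)| ≤ 1 for all t, and φ(t) = 1 for all t ≤ 1. Define c(t) = (e^t + φ(t)e^{−t})/2. Then for every t > 0 one has 0 ≤ c'(t)² ≤ c(t)²; equivalently the quantity −c'(t)²/c(t)² lies in the interval [−1, 0]. -/
/-- With a smooth nonincreasing cutoff `φ` taking values in `[0,1]`, with `|φ'| ≤ 1` and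
`φ ≡ 1` on `(-∞, 1]`, the warping function `c(t) = (e^t + φ(t)e^{-t})/2` satisfies
`0 ≤ c'(t)² ≤ c(t)²` for all `t > 0`; equivalently `-c'(t)²/c(t)² ∈ [-1, 0]`. -/
theorem stmt_1 (φ : ℝ → ℝ) (hφ : ContDiff ℝ (⊤ : ℕ∞) φ)
    (hφ01 : ∀ t, 0 ≤ φ t ∧ φ t ≤ 1)
    (hφ'le : ∀ t, deriv φ t ≤ 0)
    (hφ'abs : ∀ t, |deriv φ t| ≤ 1)
    (hφ1 : ∀ t ≤ (1 : ℝ), φ t = 1)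
    (c : ℝ → ℝ)
    (hc : ∀ t, c t = (Real.exp t + φ t * Real.exp (-t)) / 2) :
    ∀ t > (0 : ℝ), (0 ≤ (deriv c t) ^ 2 ∧ (deriv c t) ^ 2 ≤ (c t) ^ 2) ∧
      -((deriv c t) ^ 2) / (c t) ^ 2 ∈ Set.Icc (-1 : ℝ) 0 := by
  have hceq : c = fun t => (Real.exp t + φ t * Real.exp (-t)) / 2 := funext hc
  have hderiv : ∀ t, deriv c t
      = (Real.exp t + (deriv φ t - φ t) * Real.exp (-t)) / 2 := by
    intro t
    have hφd : HasDerivAt φ (deriv φ t) t :=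
      ((hφ.differentiable (by simp)) t).hasDerivAt
    have hexp : HasDerivAt Real.exp (Real.exp t) t := Real.hasDerivAt_exp t
    have hneg : HasDerivAt (fun t : ℝ => Real.exp (-t)) (-Real.exp (-t)) t := by
      have := (Real.hasDerivAt_exp (-t)).comp t ((hasDerivAt_id t).neg)
      simp at this
      exact this
    have h : HasDerivAt c ((Real.exp t + (deriv φ t - φ t) * Real.exp (-t)) / 2) t := by
      rw [hceq]
      have := ((Real.hasDerivAt_exp t).add (hφd.mul hneg)).div_const 2
      refine this.congr_deriv ?_
      ring
    exact h.deriv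
  intro t ht
  have hcpos : 0 < c t := by
    rw [hc]
    have h1 : 0 < Real.exp t := Real.exp_pos t
    have h2 : 0 ≤ φ t * Real.exp (-t) :=
      mul_nonneg (hφ01 t).1 (Real.exp_pos _).le
    linarith
  have hupper : deriv c t ≤ c t := by
    rw [hderiv, hc]
    have h1 : deriv φ t ≤ 0 := hφ'le t
    have h2 : 0 ≤ φ t := (hφ01 t).1
    have h3 : 0 < Real.exp (-t) := Real.exp_pos _
    nlinarith
  have hlower : -(c t) ≤ deriv c t := by
    rw [hderiv, hc]
    have h1 : -1 ≤ deriv φ t := neg_le_of_abs_le (hφ'abs t)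
    have h3 : 0 < Real.exp (-t) := Real.exp_pos _
    have h4 : Real.exp (-t) < Real.exp t := Real.exp_lt_exp.2 (by linarith)
    have h2 : 0 ≤ φ t := (hφ01 t).1
    nlinarith
  have hsq : (deriv c t) ^ 2 ≤ (c t) ^ 2 := by
    have := abs_le.2 ⟨hlower, hupper⟩
    calc (deriv c t) ^ 2 = |deriv c t| ^ 2 := (sq_abs _).symm
    _ ≤ (c t) ^ 2 := by nlinarith [abs_nonneg (deriv c t)]
  refine ⟨⟨sq_nonneg _, hsq⟩, ?_, ?_⟩
  · rw [neg_div, neg_le_neg_iff, div_le_one (by positivity)]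
    exact hsq
  · exact div_nonpos_of_nonpos_of_nonneg (neg_nonpos.2 (sq_nonneg _)) (sq_nonneg _)
end

section
/- Let φ : ℝ → ℝ be smooth with 0 ≤ φ(t) ≤ 1 for all t, φ'(t) ≤ 0 for all t, |φ'(t)| ≤ 1 for all t, and φ(t) = 1 for all t ≤ 1. Define c(t) = (e^t + φ(t)e^{−t})/2 and s(t) = (e^t − φ(t)e^{−t})/2. Then for every t > 0 one has 0 ≤ s'(t)c'(t) ≤ s(t)c(t); equivalently the quantity −s'(t)c'(t)/(s(t)c(t)) lies in the interval [−1, 0]. -/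
set_option maxHeartbeats 1000000 in
/-- With a smooth nonincreasing cutoff `φ` taking values in `[0,1]`, with `|φ'| ≤ 1` and
`φ ≡ 1` on `(-∞, 1]`, the warping functions `c(t) = (e^t + φ(t)e^{-t})/2` and
`s(t) = (e^t - φ(t)e^{-t})/2` satisfy `0 ≤ s'(t)c'(t) ≤ s(t)c(t)` for all `t > 0`;
equivalently `-s'(t)c'(t)/(s(t)c(t)) ∈ [-1, 0]`. -/
theorem stmt_2 (φ : ℝ → ℝ) (hφ : ContDiff ℝ (⊤ : ℕ∞) φ)
    (hφ01 : ∀ t, 0 ≤ φ t ∧ φ t ≤ 1)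
    (hφ'le : ∀ t, deriv φ t ≤ 0)
    (hφ'abs : ∀ t, |deriv φ t| ≤ 1)
    (hφ1 : ∀ t ≤ (1 : ℝ), φ t = 1)
    (c s : ℝ → ℝ)
    (hc : ∀ t, c t = (Real.exp t + φ t * Real.exp (-t)) / 2)
    (hs : ∀ t, s t = (Real.exp t - φ t * Real.exp (-t)) / 2) :
    ∀ t > (0 : ℝ), (0 ≤ deriv s t * deriv c t ∧ deriv s t * deriv c t ≤ s t * c t) ∧
      -(deriv s t * deriv c t) / (s t * c t) ∈ Set.Icc (-1 : ℝ) 0 := by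
  have hφd : Differentiable ℝ φ := hφ.differentiable (by simp)
  have hcfun : c = fun u => (Real.exp u + φ u * Real.exp (-u)) / 2 := funext hc
  have hsfun : s = fun u => (Real.exp u - φ u * Real.exp (-u)) / 2 := funext hs
  intro t ht
  -- derivative of exp(-u)
  have hde : HasDerivAt (fun u : ℝ => Real.exp (-u)) (-Real.exp (-t)) t := by
    simpa [Function.comp_def] using (Real.hasDerivAt_exp (-t)).comp t ((hasDerivAt_id t).neg)
  have hprod : HasDerivAt (fun u => φ u * Real.exp (-u))
      (deriv φ t * Real.exp (-t) + φ t * (-Real.exp (-t))) t :=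
    ((hφd t).hasDerivAt).mul hde
  have hcder : deriv c t
      = (Real.exp t + (deriv φ t * Real.exp (-t) + φ t * (-Real.exp (-t)))) / 2 := by
    rw [hcfun]
    exact (((Real.hasDerivAt_exp t).add hprod).div_const 2).deriv
  have hsder : deriv s t
      = (Real.exp t - (deriv φ t * Real.exp (-t) + φ t * (-Real.exp (-t)))) / 2 := by
    rw [hsfun]
    exact (((Real.hasDerivAt_exp t).sub hprod).div_const 2).deriv
  obtain ⟨A, hA⟩ : ∃ A, Real.exp t = A := ⟨_, rfl⟩
  obtain ⟨B, hB⟩ : ∃ B, Real.exp (-t) = B := ⟨_, rfl⟩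
  obtain ⟨p, hp⟩ : ∃ p, φ t = p := ⟨_, rfl⟩
  obtain ⟨q, hq⟩ : ∃ q, deriv φ t = q := ⟨_, rfl⟩
  rw [hA, hB, hp, hq] at hcder hsder
  have hAB : A * B = 1 := by
    rw [← hA, ← hB, ← Real.exp_add]; simp
  have hBpos : 0 < B := hB ▸ Real.exp_pos _
  have hApos : 0 < A := hA ▸ Real.exp_pos _
  have hB1 : B < 1 := by
    rw [← hB]; exact Real.exp_lt_one_iff.mpr (by linarith)
  have hA1 : 1 < A := by rw [← hA]; calc (1:ℝ) = Real.exp 0 := by simp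
      _ < Real.exp t := Real.exp_lt_exp.mpr ht
  have hp0 : 0 ≤ p := hp ▸ (hφ01 t).1
  have hp1 : p ≤ 1 := hp ▸ (hφ01 t).2
  have hq0 : q ≤ 0 := hq ▸ hφ'le t
  have hq1 : -1 ≤ q := hq ▸ neg_le_of_abs_le (hφ'abs t)
  -- the two key quantities
  have hSC : deriv s t * deriv c t = (A * A - (p - q) * (p - q) * (B * B)) / 4 := by
    rw [hcder, hsder]; ring
  have hsc : s t * c t = (A * A - p * p * (B * B)) / 4 := by
    rw [hs t, hc t, hA, hB, hp]; ring
  -- positivity of s*c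
  have hscpos : 0 < s t * c t := by
    rw [hsc]
    have : p * p * (B * B) ≤ B * B := by nlinarith [mul_nonneg (by nlinarith : (0:ℝ) ≤ 1 - p * p) (mul_pos hBpos hBpos).le]
    nlinarith
  -- nonnegativity of s'*c'
  have hSC0 : 0 ≤ deriv s t * deriv c t := by
    rcases lt_or_ge t 1 with h1 | h1
    · -- q = 0 here
      have hq' : q = 0 := by
        have hev : φ =ᶠ[nhds t] fun _ => (1 : ℝ) :=
          Filter.eventuallyEq_of_mem (Iio_mem_nhds h1) (fun u hu => hφ1 u (le_of_lt hu))
        rw [← hq, hev.deriv_eq]; simp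
      rw [hSC, hq']
      have : p * B ≤ 1 := by nlinarith
      nlinarith
    · -- t ≥ 1, so A ≥ e ≥ 2
      have hA2 : 2 ≤ A := by
        have := Real.add_one_le_exp (1 : ℝ)
        have h2 : Real.exp 1 ≤ A := by
          rw [← hA]; exact Real.exp_le_exp.mpr h1
        linarith
      have hpq : p - q ≤ 2 := by linarith
      have hpq0 : 0 ≤ p - q := by linarith
      have hBA : B * A = 1 := by linarith [hAB]
      rw [hSC]
      have h4 : (p - q) * B ≤ 2 * B := mul_le_mul_of_nonneg_right hpq hBpos.le
      have h5 : 2 * B ≤ 1 := by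
        have := mul_le_mul_of_nonneg_right hA2 hBpos.le
        linarith [hAB]
      have h6 : (p - q) * B ≤ 1 := by linarith
      have h7 : 0 ≤ (p - q) * B := mul_nonneg hpq0 hBpos.le
      have h8 : ((p - q) * B) * ((p - q) * B) ≤ 1 := mul_le_one₀ h6 h7 h6
      have h9 : (1:ℝ) ≤ A * A := by nlinarith
      nlinarith [h8, h9]
  -- s'*c' ≤ s*c
  have hSCle : deriv s t * deriv c t ≤ s t * c t := by
    rw [hSC, hsc]
    have : p * p ≤ (p - q) * (p - q) := by nlinarith
    nlinarith
  refine ⟨⟨hSC0, hSCle⟩, ?_⟩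
  rw [Set.mem_Icc]
  constructor
  · rw [le_div_iff₀ hscpos]; linarith
  · exact div_nonpos_of_nonpos_of_nonneg (by linarith) hscpos.le
end

section
/- Let 0 < ε ≤ 1 and let φ : ℝ → ℝ be smooth with 0 ≤ φ(t) ≤ 1 for all t, φ'(t) ≤ 0 for all t, |φ'(t)| ≤ ε and |φ''(t)| ≤ ε for all t, and φ(t) = 1 for all t ≤ 1. Define s(t) = (e^t − φ(t)e^{−t})/2. Then for every t > 0 one has 0 < s''(t) ≤ (1 + ε)s(t); equivalently the quantity −s''(t)/s(t) lies in the interval [−1−ε, 0). -/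
/-- For `0 < ε ≤ 1` and a smooth nonincreasing cutoff `φ` with values in `[0,1]`,
`|φ'| ≤ ε`, `|φ''| ≤ ε` and `φ ≡ 1` on `(-∞, 1]`, the warping function
`s(t) = (e^t - φ(t)e^{-t})/2` satisfies `0 < s''(t) ≤ (1+ε)s(t)` for all `t > 0`;
equivalently `-s''(t)/s(t) ∈ [-1-ε, 0)`. -/
theorem stmt_3 (ε : ℝ) (hε0 : 0 < ε) (hε1 : ε ≤ 1)
    (φ : ℝ → ℝ) (hφ : ContDiff ℝ (⊤ : ℕ∞) φ)
    (hφ01 : ∀ t, 0 ≤ φ t ∧ φ t ≤ 1)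
    (hφ'le : ∀ t, deriv φ t ≤ 0)
    (hφ'abs : ∀ t, |deriv φ t| ≤ ε)
    (hφ''abs : ∀ t, |deriv (deriv φ) t| ≤ ε)
    (hφ1 : ∀ t ≤ (1 : ℝ), φ t = 1)
    (s : ℝ → ℝ)
    (hs : ∀ t, s t = (Real.exp t - φ t * Real.exp (-t)) / 2) :
    ∀ t > (0 : ℝ), (0 < deriv (deriv s) t ∧ deriv (deriv s) t ≤ (1 + ε) * s t) ∧
      -(deriv (deriv s) t) / s t ∈ Set.Ico (-1 - ε) 0 := by
  have hsfun : s = fun t => (Real.exp t - φ t * Real.exp (-t)) / 2 := funext hs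
  have hφd : Differentiable ℝ φ := hφ.differentiable (by norm_num)
  have hφ'c : ContDiff ℝ (⊤ : ℕ∞) (deriv φ) := (contDiff_infty_iff_deriv.mp hφ).2
  have hφ'd : Differentiable ℝ (deriv φ) := hφ'c.differentiable (by norm_num)
  have hexp : ∀ t : ℝ, HasDerivAt (fun t => Real.exp (-t)) (-Real.exp (-t)) t := by
    intro t
    simpa using (hasDerivAt_neg t).exp
  have hs1 : ∀ t, HasDerivAt s
      ((Real.exp t - deriv φ t * Real.exp (-t) + φ t * Real.exp (-t)) / 2) t := by
    intro t
    rw [hsfun]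
    have h := ((Real.hasDerivAt_exp t).sub (((hφd t).hasDerivAt).mul (hexp t))).div_const 2
    exact h.congr_deriv (by ring)
  have hds : deriv s = fun t =>
      (Real.exp t - deriv φ t * Real.exp (-t) + φ t * Real.exp (-t)) / 2 :=
    funext fun t => (hs1 t).deriv
  have hs2 : ∀ t, deriv (deriv s) t =
      (Real.exp t - deriv (deriv φ) t * Real.exp (-t) + 2 * deriv φ t * Real.exp (-t)
        - φ t * Real.exp (-t)) / 2 := by
    intro t
    have h : HasDerivAt (deriv s)
        ((Real.exp t - deriv (deriv φ) t * Real.exp (-t) + 2 * deriv φ t * Real.exp (-t)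
          - φ t * Real.exp (-t)) / 2) t := by
      rw [hds]
      have h := (((Real.hasDerivAt_exp t).sub
          (((hφ'd t).hasDerivAt).mul (hexp t))).add
          (((hφd t).hasDerivAt).mul (hexp t))).div_const 2
      exact h.congr_deriv (by ring)
    exact h.deriv
  intro t ht
  have hEe : Real.exp t * Real.exp (-t) = 1 := by
    rw [← Real.exp_add]; simp
  have he_pos : 0 < Real.exp (-t) := Real.exp_pos _
  have hE_pos : 0 < Real.exp t := Real.exp_pos _
  have heE : Real.exp (-t) < Real.exp t := Real.exp_lt_exp.mpr (by linarith)
  have hA := hφ01 t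
  have hspos : 0 < s t := by
    rw [hs t]
    nlinarith [mul_nonneg (sub_nonneg.mpr hA.2) he_pos.le]
  have hmain : 0 < deriv (deriv s) t ∧ deriv (deriv s) t ≤ (1 + ε) * s t := by
    rcases lt_or_ge t 1 with htl | htg
    · -- t < 1 : φ ≡ 1 near t, so deriv φ and second deriv vanish
      have hev : φ =ᶠ[nhds t] fun _ => (1 : ℝ) := by
        filter_upwards [Iio_mem_nhds htl] with x hx
        exact hφ1 x (le_of_lt hx)
      have hev' : deriv φ =ᶠ[nhds t] fun _ => (0 : ℝ) := by
        have := hev.deriv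
        simpa using this
      have hB : deriv φ t = 0 := hev'.self_of_nhds
      have hC : deriv (deriv φ) t = 0 := by
        have := hev'.deriv
        simpa using this.self_of_nhds
      have hA1 : φ t = 1 := hφ1 t htl.le
      rw [hs2 t, hs t, hB, hC, hA1]
      constructor
      · nlinarith
      · nlinarith
    · -- t ≥ 1
      have hB1 : -ε ≤ deriv φ t := (abs_le.mp (hφ'abs t)).1
      have hB2 : deriv φ t ≤ 0 := hφ'le t
      have hC1 : -ε ≤ deriv (deriv φ) t := (abs_le.mp (hφ''abs t)).1
      have hC2 : deriv (deriv φ) t ≤ ε := (abs_le.mp (hφ''abs t)).2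
      have hE2 : (2 : ℝ) < Real.exp t := by
        have h1 : Real.exp 1 ≤ Real.exp t := Real.exp_le_exp.mpr htg
        have h2 : (2 : ℝ) < Real.exp 1 := by
          have := Real.exp_one_gt_d9
          linarith
        linarith
      have hehalf : Real.exp (-t) < 1 / 2 := by
        nlinarith
      rw [hs2 t, hs t]
      constructor
      · nlinarith [mul_nonneg (sub_nonneg.mpr hA.2) he_pos.le,
          mul_nonneg hA.1 he_pos.le,
          mul_le_mul_of_nonneg_right hC2 he_pos.le,
          mul_le_mul_of_nonneg_right hB1 he_pos.le]
      · nlinarith [mul_nonneg hε0.le (mul_nonneg (sub_nonneg.mpr hA.2) he_pos.le),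
          mul_le_mul_of_nonneg_right hB2 he_pos.le,
          mul_le_mul_of_nonneg_right hC1 he_pos.le,
          mul_nonneg hε0.le (sub_nonneg.mpr hE2.le)]
  refine ⟨hmain, ?_, ?_⟩
  · rw [le_div_iff₀ hspos]
    nlinarith [hmain.2]
  · apply div_neg_of_neg_of_pos _ hspos
    linarith [hmain.1]
end

section
/- Let 0 < ε ≤ 1 and let φ : ℝ → ℝ be smooth with 0 ≤ φ(t) ≤ 1 for all t, φ'(t) ≤ 0 for all t, |φ'(t)| ≤ ε and |φ''(t)| ≤ ε for all t, and φ(t) = 1 for all t ≤ 1. Define c(t) = (e^t + φ(t)e^{−t})/2. Then for every t > 0 one has 0 < c''(t) ≤ (1 + ε)c(t); equivalently the quantity −c''(t)/c(t) lies in the interval [−1−ε, 0). -/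
/-- For `0 < ε ≤ 1` and a smooth nonincreasing cutoff `φ` with values in `[0,1]`,
`|φ'| ≤ ε`, `|φ''| ≤ ε` and `φ ≡ 1` on `(-∞, 1]`, the warping function
`c(t) = (e^t + φ(t)e^{-t})/2` satisfies `0 < c''(t) ≤ (1+ε)c(t)` for all `t > 0`;
equivalently `-c''(t)/c(t) ∈ [-1-ε, 0)`. -/
theorem stmt_4 (ε : ℝ) (hε0 : 0 < ε) (hε1 : ε ≤ 1)
    (φ : ℝ → ℝ) (hφ : ContDiff ℝ (⊤ : ℕ∞) φ)
    (hφ01 : ∀ t, 0 ≤ φ t ∧ φ t ≤ 1)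
    (hφ'le : ∀ t, deriv φ t ≤ 0)
    (hφ'abs : ∀ t, |deriv φ t| ≤ ε)
    (hφ''abs : ∀ t, |deriv (deriv φ) t| ≤ ε)
    (hφ1 : ∀ t ≤ (1 : ℝ), φ t = 1)
    (c : ℝ → ℝ)
    (hc : ∀ t, c t = (Real.exp t + φ t * Real.exp (-t)) / 2) :
    ∀ t > (0 : ℝ), (0 < deriv (deriv c) t ∧ deriv (deriv c) t ≤ (1 + ε) * c t) ∧
      -(deriv (deriv c) t) / c t ∈ Set.Ico (-1 - ε) 0 := by
  have hφd : Differentiable ℝ φ := hφ.differentiable (by simp)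
  have hφtop' : ContDiff ℝ (⊤ : ℕ∞) (deriv φ) := (contDiff_infty_iff_deriv.mp hφ).2
  have hφd2 : Differentiable ℝ (deriv φ) := hφtop'.differentiable (by simp)
  have hcont2 : Continuous (deriv (deriv φ)) :=
    ((contDiff_infty_iff_deriv.mp hφtop').2).continuous
  -- φ' = 0 on Iio 1
  have hder0 : ∀ t < (1 : ℝ), deriv φ t = 0 := by
    intro t ht
    have hev : φ =ᶠ[nhds t] fun _ => (1 : ℝ) :=
      Filter.eventuallyEq_of_mem (Iio_mem_nhds ht) (fun x hx => hφ1 x (le_of_lt hx))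
    rw [hev.deriv_eq, deriv_const]
  have hder20 : ∀ t < (1 : ℝ), deriv (deriv φ) t = 0 := by
    intro t ht
    have hev : deriv φ =ᶠ[nhds t] fun _ => (0 : ℝ) :=
      Filter.eventuallyEq_of_mem (Iio_mem_nhds ht) (fun x hx => hder0 x hx)
    rw [hev.deriv_eq, deriv_const]
  -- extend to Iic 1 by continuity
  have hder0' : ∀ t ≤ (1 : ℝ), deriv φ t = 0 := by
    have h : Set.EqOn (deriv φ) (fun _ => (0:ℝ)) (Set.Iio 1) := fun x hx => hder0 x hx
    have := h.closure hφtop'.continuous continuous_const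
    rw [closure_Iio] at this
    exact fun t ht => this ht
  have hder20' : ∀ t ≤ (1 : ℝ), deriv (deriv φ) t = 0 := by
    have h : Set.EqOn (deriv (deriv φ)) (fun _ => (0:ℝ)) (Set.Iio 1) := fun x hx => hder20 x hx
    have := h.closure hcont2 continuous_const
    rw [closure_Iio] at this
    exact fun t ht => this ht
  have hceq : c = fun t => (Real.exp t + φ t * Real.exp (-t)) / 2 := funext hc
  have hexp_neg : ∀ t : ℝ, HasDerivAt (fun t => Real.exp (-t)) (-Real.exp (-t)) t := by
    intro t
    simpa [mul_comm] using (hasDerivAt_neg t).exp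
  have hc1 : ∀ t, HasDerivAt c ((Real.exp t + (deriv φ t - φ t) * Real.exp (-t)) / 2) t := by
    intro t
    rw [hceq]
    have := ((Real.hasDerivAt_exp t).add (((hφd t).hasDerivAt).mul (hexp_neg t))).div_const 2
    exact this.congr_deriv (by ring)
  have hc' : deriv c = fun t => (Real.exp t + (deriv φ t - φ t) * Real.exp (-t)) / 2 :=
    funext fun t => (hc1 t).deriv
  have hc2 : ∀ t, HasDerivAt (deriv c)
      ((Real.exp t + (deriv (deriv φ) t - 2 * deriv φ t + φ t) * Real.exp (-t)) / 2) t := by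
    intro t
    rw [hc']
    have := ((Real.hasDerivAt_exp t).add
      ((((hφd2 t).hasDerivAt).sub ((hφd t).hasDerivAt)).mul (hexp_neg t))).div_const 2
    exact this.congr_deriv (by simp only [Pi.sub_apply]; ring)
  have hc'' : ∀ t, deriv (deriv c) t
      = (Real.exp t + (deriv (deriv φ) t - 2 * deriv φ t + φ t) * Real.exp (-t)) / 2 :=
    fun t => (hc2 t).deriv
  intro t ht
  have hE : 0 < Real.exp t := Real.exp_pos t
  have he : 0 < Real.exp (-t) := Real.exp_pos (-t)
  have heE : Real.exp (-t) < Real.exp t := Real.exp_lt_exp.mpr (by linarith)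
  obtain ⟨ha0, ha1⟩ := hφ01 t
  have hb := hφ'le t
  have hb' := abs_le.mp (hφ'abs t)
  have hd' := abs_le.mp (hφ''abs t)
  have hcpos : 0 < c t := by rw [hc t]; nlinarith
  have hpos : 0 < deriv (deriv c) t := by
    rw [hc'']
    nlinarith [hd'.1, hb, ha0]
  have hupper : deriv (deriv c) t ≤ (1 + ε) * c t := by
    rw [hc'', hc t]
    rcases le_or_gt t 1 with h1 | h1
    · rw [hder0' t h1, hder20' t h1]
      nlinarith [mul_nonneg hε0.le (add_nonneg hE.le (mul_nonneg ha0 he.le))]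
    · have hE1 : Real.exp 1 ≤ Real.exp t := Real.exp_le_exp.mpr h1.le
      have he1 : Real.exp (-t) ≤ Real.exp (-1) := Real.exp_le_exp.mpr (by linarith)
      have hprod : Real.exp 1 * Real.exp (-1) = 1 := by
        rw [← Real.exp_add]; simp
      have h3 : 3 < Real.exp 1 * Real.exp 1 := by
        nlinarith [Real.exp_one_gt_d9]
      have hexp1pos : 0 < Real.exp 1 := Real.exp_pos 1
      have hexpneg1pos : 0 < Real.exp (-1) := Real.exp_pos (-1)
      -- key: 3 * exp(-t) ≤ exp t
      have hkey : 3 * Real.exp (-t) ≤ Real.exp t := by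
        nlinarith
      nlinarith [hd'.2, hb'.1, hb, mul_nonneg (mul_nonneg hε0.le ha0) he.le]
  refine ⟨⟨hpos, hupper⟩, ?_, ?_⟩
  · have : deriv (deriv c) t / c t ≤ 1 + ε := (div_le_iff₀ hcpos).mpr (by linarith)
    rw [neg_div]
    linarith
  · have : 0 < deriv (deriv c) t / c t := div_pos hpos hcpos
    rw [neg_div]
    linarith
end

section
/- For every ε with 0 < ε ≤ 1 there exist a real number r > 1 and smooth functions s, c : ℝ → ℝ with the following properties: s(t) = sinh(t) and c(t) = cosh(t) for all t ≤ 1; s(t) = c(t) = e^t/2 for all t ≥ r (so in particular s'(t) = s(t) and c'(t) = c(t) for t ≥ r); s(0) = 0, s'(0) = 1, c(0) = 1, c'(0) = 0; and for all t > 0: s(t) > 0, c(t) > 0, 0 ≤ s''(t) ≤ (1+ε)s(t), 0 ≤ c''(t) ≤ (1+ε)c(t), 0 ≤ s'(t)c'(t) ≤ s(t)c(t), and c'(t)² ≤ c(t)². -/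
open Real Filter Set

private lemma psi_diff : Differentiable ℝ Real.smoothTransition :=
  (Real.smoothTransition.contDiff (n := ⊤)).differentiable (by simp)

private lemma psi1_contDiff : ContDiff ℝ (⊤ : ℕ∞) (deriv Real.smoothTransition) :=
  (contDiff_infty_iff_deriv.mp (Real.smoothTransition.contDiff (n := ⊤))).2

private lemma psi1_diff : Differentiable ℝ (deriv Real.smoothTransition) :=
  psi1_contDiff.differentiable (by simp)

private lemma psi2_cont : Continuous (deriv (deriv Real.smoothTransition)) :=
  (contDiff_infty_iff_deriv.mp psi1_contDiff).2.continuous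

private lemma psi_mono : Monotone Real.smoothTransition := by
  have gmono : Monotone expNegInvGlue := by
    intro x y hxy
    rcases le_or_gt y 0 with hy | hy
    · rw [expNegInvGlue.zero_of_nonpos (hxy.trans hy), expNegInvGlue.zero_of_nonpos hy]
    rcases le_or_gt x 0 with hx | hx
    · rw [expNegInvGlue.zero_of_nonpos hx]; exact expNegInvGlue.nonneg y
    have h1 : expNegInvGlue x = Real.exp (-x⁻¹) := by simp [expNegInvGlue, hx.not_ge]
    have h2 : expNegInvGlue y = Real.exp (-y⁻¹) := by simp [expNegInvGlue, hy.not_ge]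
    rw [h1, h2, Real.exp_le_exp, neg_le_neg_iff]
    gcongr
  intro x y hxy
  unfold Real.smoothTransition
  rw [div_le_div_iff₀ (Real.smoothTransition.pos_denom x) (Real.smoothTransition.pos_denom y)]
  have h1 : expNegInvGlue x ≤ expNegInvGlue y := gmono hxy
  have h2 : expNegInvGlue (1 - y) ≤ expNegInvGlue (1 - x) := gmono (by linarith)
  nlinarith [expNegInvGlue.nonneg x, expNegInvGlue.nonneg (1 - y),
    mul_le_mul h1 h2 (expNegInvGlue.nonneg _) (expNegInvGlue.nonneg _)]

private lemma psi1_nonneg (x : ℝ) : 0 ≤ deriv Real.smoothTransition x := by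
  have hd : HasDerivAt Real.smoothTransition (deriv Real.smoothTransition x) x :=
    (psi_diff x).hasDerivAt
  rw [hasDerivAt_iff_tendsto_slope] at hd
  have hd' := hd.mono_left (nhdsWithin_mono x (s := Ioi x) (by intro y hy; exact ne_of_gt hy))
  refine ge_of_tendsto hd' ?_
  filter_upwards [self_mem_nhdsWithin] with y hy
  rw [slope_def_field]
  exact div_nonneg (sub_nonneg.2 (psi_mono (le_of_lt hy))) (sub_nonneg.2 (le_of_lt hy))

private lemma psi1_zero_of_nonpos {x : ℝ} (hx : x ≤ 0) : deriv Real.smoothTransition x = 0 := by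
  have h : IsLocalMin Real.smoothTransition x := Filter.Eventually.of_forall fun y => by
    rw [Real.smoothTransition.zero_of_nonpos hx]; exact Real.smoothTransition.nonneg y
  exact h.deriv_eq_zero

private lemma psi1_zero_of_one_le {x : ℝ} (hx : 1 ≤ x) : deriv Real.smoothTransition x = 0 := by
  have h : IsLocalMax Real.smoothTransition x := Filter.Eventually.of_forall fun y => by
    rw [Real.smoothTransition.one_of_one_le hx]; exact Real.smoothTransition.le_one y
  exact h.deriv_eq_zero

private lemma psi2_zero_of_nonpos {x : ℝ} (hx : x ≤ 0) :
    deriv (deriv Real.smoothTransition) x = 0 := by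
  have h : IsLocalMin (deriv Real.smoothTransition) x := Filter.Eventually.of_forall fun y => by
    rw [psi1_zero_of_nonpos hx]; exact psi1_nonneg y
  exact h.deriv_eq_zero

private lemma psi2_zero_of_one_le {x : ℝ} (hx : 1 ≤ x) :
    deriv (deriv Real.smoothTransition) x = 0 := by
  have h : IsLocalMin (deriv Real.smoothTransition) x := Filter.Eventually.of_forall fun y => by
    rw [psi1_zero_of_one_le hx]; exact psi1_nonneg y
  exact h.deriv_eq_zero

private lemma psi_bound : ∃ M : ℝ, 1 ≤ M ∧ (∀ x, |deriv Real.smoothTransition x| ≤ M) ∧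
    (∀ x, |deriv (deriv Real.smoothTransition) x| ≤ M) := by
  obtain ⟨C1, hC1⟩ := (isCompact_Icc (a := (0:ℝ)) (b := 1)).exists_bound_of_continuousOn
    psi1_contDiff.continuous.continuousOn
  obtain ⟨C2, hC2⟩ := (isCompact_Icc (a := (0:ℝ)) (b := 1)).exists_bound_of_continuousOn
    psi2_cont.continuousOn
  refine ⟨max 1 (max C1 C2), le_max_left _ _, fun x => ?_, fun x => ?_⟩
  · rcases le_or_gt x 0 with hx | hx
    · rw [psi1_zero_of_nonpos hx]; simp
    rcases le_or_gt 1 x with hx1 | hx1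
    · rw [psi1_zero_of_one_le hx1]; simp
    have h := hC1 x ⟨hx.le, hx1.le⟩
    rw [Real.norm_eq_abs] at h
    exact h.trans ((le_max_left C1 C2).trans (le_max_right _ _))
  · rcases le_or_gt x 0 with hx | hx
    · rw [psi2_zero_of_nonpos hx]; simp
    rcases le_or_gt 1 x with hx1 | hx1
    · rw [psi2_zero_of_one_le hx1]; simp
    have h := hC2 x ⟨hx.le, hx1.le⟩
    rw [Real.norm_eq_abs] at h
    exact h.trans ((le_max_right C1 C2).trans (le_max_right _ _))

set_option maxHeartbeats 2000000 in
/-- Main analytic lemma of the cusp-closing construction: for every `0 < ε ≤ 1` there are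
`r > 1` and smooth warping functions `s, c : ℝ → ℝ` with `s = sinh`, `c = cosh` on
`(-∞, 1]`, `s(t) = c(t) = e^t/2` (hence `s' = s`, `c' = c`) on `[r, ∞)`, the initial
conditions `s(0) = 0`, `s'(0) = 1`, `c(0) = 1`, `c'(0) = 0`, and for all `t > 0`:
`s(t) > 0`, `c(t) > 0`, `0 ≤ s''(t) ≤ (1+ε)s(t)`, `0 ≤ c''(t) ≤ (1+ε)c(t)`,
`0 ≤ s'(t)c'(t) ≤ s(t)c(t)` and `c'(t)² ≤ c(t)²`. -/
theorem stmt_6 : ∀ ε : ℝ, 0 < ε → ε ≤ 1 →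
    ∃ r : ℝ, 1 < r ∧ ∃ s c : ℝ → ℝ, ContDiff ℝ (⊤ : ℕ∞) s ∧ ContDiff ℝ (⊤ : ℕ∞) c ∧
      (∀ t ≤ (1 : ℝ), s t = Real.sinh t ∧ c t = Real.cosh t) ∧
      (∀ t ≥ r, s t = Real.exp t / 2 ∧ c t = Real.exp t / 2 ∧
        deriv s t = s t ∧ deriv c t = c t) ∧
      s 0 = 0 ∧ deriv s 0 = 1 ∧ c 0 = 1 ∧ deriv c 0 = 0 ∧
      (∀ t > (0 : ℝ), 0 < s t ∧ 0 < c t ∧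
        (0 ≤ deriv (deriv s) t ∧ deriv (deriv s) t ≤ (1 + ε) * s t) ∧
        (0 ≤ deriv (deriv c) t ∧ deriv (deriv c) t ≤ (1 + ε) * c t) ∧
        (0 ≤ deriv s t * deriv c t ∧ deriv s t * deriv c t ≤ s t * c t) ∧
        (deriv c t) ^ 2 ≤ (c t) ^ 2) := by
  intro ε hε hε1
  obtain ⟨M, hM1, hMb1, hMb2⟩ := psi_bound
  set L : ℝ := max 1 (M / ε) with hLdef
  have hL1 : (1:ℝ) ≤ L := le_max_left _ _
  have hL0 : (0:ℝ) < L := lt_of_lt_of_le one_pos hL1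
  have hML : M / L ≤ ε := by
    rw [div_le_iff₀ hL0]
    have h1 : M / ε ≤ L := le_max_right _ _
    have h2 : M / ε * ε ≤ L * ε := by nlinarith
    rw [div_mul_cancel₀ _ (ne_of_gt hε)] at h2
    linarith
  have hinv0 : (0:ℝ) < 1 / L := by positivity
  have hinv1 : 1 / L ≤ 1 := by rw [div_le_one hL0]; exact hL1
  have hMinv : M * (1 / L) ≤ ε := by rw [mul_one_div]; exact hML
  set r : ℝ := 1 + L with hrdef
  have hr1 : 1 < r := by rw [hrdef]; linarith
  set F : ℝ → ℝ := fun t => Real.smoothTransition ((r - t) / L) with hF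
  set F1 : ℝ → ℝ := fun t => deriv Real.smoothTransition ((r - t) / L) * (-(1 / L)) with hF1
  set F2 : ℝ → ℝ := fun t =>
    deriv (deriv Real.smoothTransition) ((r - t) / L) * (-(1 / L)) * (-(1 / L)) with hF2
  set S : ℝ → ℝ := fun t => (Real.exp t - F t * Real.exp (-t)) / 2 with hS
  set C : ℝ → ℝ := fun t => (Real.exp t + F t * Real.exp (-t)) / 2 with hC
  set S1 : ℝ → ℝ := fun t => (Real.exp t + (F t - F1 t) * Real.exp (-t)) / 2 with hS1
  set C1 : ℝ → ℝ := fun t => (Real.exp t + (F1 t - F t) * Real.exp (-t)) / 2 with hC1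
  set S2 : ℝ → ℝ := fun t => (Real.exp t - (F2 t - 2 * F1 t + F t) * Real.exp (-t)) / 2 with hS2
  set C2 : ℝ → ℝ := fun t => (Real.exp t + (F2 t - 2 * F1 t + F t) * Real.exp (-t)) / 2 with hC2
  -- derivative facts
  have hu : ∀ t : ℝ, HasDerivAt (fun t => (r - t) / L) (-(1 / L)) t := fun t => by
    simpa [neg_div] using ((hasDerivAt_const t r).sub (hasDerivAt_id t)).div_const L
  have hexp' : ∀ t : ℝ, HasDerivAt (fun t : ℝ => Real.exp (-t)) (-Real.exp (-t)) t := fun t => by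
    simpa using (hasDerivAt_neg t).exp
  have hFd : ∀ t, HasDerivAt F (F1 t) t := fun t => by
    rw [hF, hF1]
    exact (psi_diff _).hasDerivAt.comp t (hu t)
  have hF1d : ∀ t, HasDerivAt F1 (F2 t) t := fun t => by
    rw [hF1, hF2]
    exact ((psi1_diff _).hasDerivAt.comp t (hu t)).mul_const _
  have hSd : ∀ t, HasDerivAt S (S1 t) t := fun t => by
    simp only [hS, hS1]
    convert ((Real.hasDerivAt_exp t).sub ((hFd t).mul (hexp' t))).div_const 2 using 1
    · rfl
    · rfl
    · rfl
    · ring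
  have hCd : ∀ t, HasDerivAt C (C1 t) t := fun t => by
    simp only [hC, hC1]
    convert ((Real.hasDerivAt_exp t).add ((hFd t).mul (hexp' t))).div_const 2 using 1
    · rfl
    · rfl
    · rfl
    · ring
  have hS1d : ∀ t, HasDerivAt S1 (S2 t) t := fun t => by
    simp only [hS1, hS2]
    convert ((Real.hasDerivAt_exp t).add
      (((hFd t).sub (hF1d t)).mul (hexp' t))).div_const 2 using 1
    · rfl
    · rfl
    · rfl
    · rw [Pi.sub_apply]; ring
  have hC1d : ∀ t, HasDerivAt C1 (C2 t) t := fun t => by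
    simp only [hC1, hC2]
    convert ((Real.hasDerivAt_exp t).add
      (((hF1d t).sub (hFd t)).mul (hexp' t))).div_const 2 using 1
    · rfl
    · rfl
    · rfl
    · rw [Pi.sub_apply]; ring
  have hdS : deriv S = S1 := funext fun t => (hSd t).deriv
  have hdC : deriv C = C1 := funext fun t => (hCd t).deriv
  have hddS : ∀ t, deriv (deriv S) t = S2 t := fun t => by rw [hdS]; exact (hS1d t).deriv
  have hddC : ∀ t, deriv (deriv C) t = C2 t := fun t => by rw [hdC]; exact (hC1d t).deriv
  -- smoothness
  have hFC : ContDiff ℝ (⊤ : ℕ∞) F := by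
    rw [hF]
    exact Real.smoothTransition.contDiff.comp ((contDiff_const.sub contDiff_id).div_const L)
  have hexpC : ContDiff ℝ (⊤ : ℕ∞) fun t : ℝ => Real.exp (-t) :=
    Real.contDiff_exp.comp contDiff_neg
  have hSC : ContDiff ℝ (⊤ : ℕ∞) S := by
    rw [hS]; exact (Real.contDiff_exp.sub (hFC.mul hexpC)).div_const 2
  have hCC : ContDiff ℝ (⊤ : ℕ∞) C := by
    rw [hC]; exact (Real.contDiff_exp.add (hFC.mul hexpC)).div_const 2
  -- values of F, F1, F2
  have harg_ge : ∀ t ≤ (1:ℝ), 1 ≤ (r - t) / L := by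
    intro t ht; rw [le_div_iff₀ hL0, hrdef]; linarith
  have harg_le : ∀ t, r ≤ t → (r - t) / L ≤ 0 := by
    intro t ht; apply div_nonpos_of_nonpos_of_nonneg <;> linarith
  have hFone : ∀ t ≤ (1:ℝ), F t = 1 := fun t ht => by
    simp only [hF]; exact Real.smoothTransition.one_of_one_le (harg_ge t ht)
  have hFzero : ∀ t, r ≤ t → F t = 0 := fun t ht => by
    simp only [hF]; exact Real.smoothTransition.zero_of_nonpos (harg_le t ht)
  have hF1zero : ∀ t, t ≤ 1 ∨ r ≤ t → F1 t = 0 := by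
    intro t ht
    simp only [hF1]
    rcases ht with ht | ht
    · rw [psi1_zero_of_one_le (harg_ge t ht), zero_mul]
    · rw [psi1_zero_of_nonpos (harg_le t ht), zero_mul]
  have hF2zero : ∀ t, t ≤ 1 ∨ r ≤ t → F2 t = 0 := by
    intro t ht
    simp only [hF2]
    rcases ht with ht | ht
    · rw [psi2_zero_of_one_le (harg_ge t ht), zero_mul, zero_mul]
    · rw [psi2_zero_of_nonpos (harg_le t ht), zero_mul, zero_mul]
  have hF01 : ∀ t, 0 ≤ F t ∧ F t ≤ 1 := fun t => by
    simp only [hF]; exact ⟨Real.smoothTransition.nonneg _, Real.smoothTransition.le_one _⟩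
  have hF1b : ∀ t, -ε ≤ F1 t ∧ F1 t ≤ 0 := by
    intro t
    simp only [hF1]
    have h0 := psi1_nonneg ((r - t) / L)
    have h1 := le_of_abs_le (hMb1 ((r - t) / L))
    constructor
    · nlinarith [mul_le_mul_of_nonneg_right h1 hinv0.le, hMinv]
    · exact mul_nonpos_of_nonneg_of_nonpos h0 (by linarith)
  have hF2b : ∀ t, -ε ≤ F2 t ∧ F2 t ≤ ε := by
    intro t
    simp only [hF2]
    have h1 := abs_le.mp (hMb2 ((r - t) / L))
    have hq : (0:ℝ) ≤ 1 / L * (1 / L) := by positivity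
    have hq1 : 1 / L * (1 / L) ≤ 1 / L := by nlinarith
    have hM0 : (0:ℝ) ≤ M := by linarith
    constructor
    · nlinarith [mul_le_mul_of_nonneg_right h1.1 hq, mul_le_mul_of_nonneg_left hq1 hM0, hMinv]
    · nlinarith [mul_le_mul_of_nonneg_right h1.2 hq, mul_le_mul_of_nonneg_left hq1 hM0, hMinv]
  clear_value L r F F1 F2 S C S1 C1 S2 C2
  refine ⟨r, hr1, S, C, hSC, hCC, ?_, ?_, ?_, ?_, ?_, ?_, ?_⟩
  · -- t ≤ 1 : sinh / cosh
    intro t ht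
    constructor
    · simp only [hS, hFone t ht, one_mul]; rw [Real.sinh_eq]
    · simp only [hC, hFone t ht, one_mul]; rw [Real.cosh_eq]
  · -- t ≥ r
    intro t ht
    refine ⟨?_, ?_, ?_, ?_⟩
    · simp only [hS, hFzero t ht, zero_mul, sub_zero]
    · simp only [hC, hFzero t ht, zero_mul, add_zero]
    · rw [hdS]; simp only [hS1, hS, hFzero t ht, hF1zero t (Or.inr ht)]; ring
    · rw [hdC]; simp only [hC1, hC, hFzero t ht, hF1zero t (Or.inr ht)]; ring
  · simp only [hS, hFone 0 (by norm_num)]; norm_num [Real.exp_zero]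
  · rw [hdS]
    simp only [hS1, hFone 0 (by norm_num), hF1zero 0 (Or.inl (by norm_num))]
    norm_num [Real.exp_zero]
  · simp only [hC, hFone 0 (by norm_num)]; norm_num [Real.exp_zero]
  · rw [hdC]
    simp only [hC1, hFone 0 (by norm_num), hF1zero 0 (Or.inl (by norm_num))]
    norm_num [Real.exp_zero]
  · -- main inequalities
    intro t ht
    clear hMb1 hMb2 hu hexp' hFd hF1d hSd hCd hS1d hC1d hSC hCC hFC hexpC
    clear harg_ge harg_le hLdef hrdef hML hinv0 hinv1 hMinv hM1 hr1 hL0 hL1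
    have hE1 : 1 < Real.exp t := by
      have h := Real.exp_lt_exp.mpr ht
      rwa [Real.exp_zero] at h
    have hEE : Real.exp t * Real.exp (-t) = 1 := by
      rw [← Real.exp_add]; norm_num
    have hE'pos : (0:ℝ) < Real.exp (-t) := Real.exp_pos _
    have hE'lt1 : Real.exp (-t) < 1 := by nlinarith
    obtain ⟨ha0, ha1⟩ := hF01 t
    rw [hddS t, hddC t, hdS, hdC]
    rcases le_or_gt t 1 with ht1 | ht1
    · have e1 : F t = 1 := hFone t ht1
      have e2 : F1 t = 0 := hF1zero t (Or.inl ht1)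
      have e3 : F2 t = 0 := hF2zero t (Or.inl ht1)
      simp only [hS, hC, hS1, hC1, hS2, hC2, e1, e2, e3]
      have hx1 : ε * Real.exp (-t) ≤ ε * Real.exp t :=
        mul_le_mul_of_nonneg_left (by linarith) hε.le
      have hx3 : (0:ℝ) ≤ ε * (Real.exp t + Real.exp (-t)) :=
        mul_nonneg hε.le (by linarith)
      have hx2 : (0:ℝ) ≤ (Real.exp t + Real.exp (-t)) * (Real.exp t - Real.exp (-t)) :=
        mul_nonneg (by linarith) (by linarith)
      refine ⟨by linarith, by linarith, ⟨by linarith, by linarith⟩,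
        ⟨by linarith, by linarith⟩, ⟨by nlinarith [hx2], le_of_eq (by ring)⟩,
        by nlinarith [hEE]⟩
    · obtain ⟨hb1, hb2⟩ := hF1b t
      obtain ⟨hd1, hd2⟩ := hF2b t
      have hE27 : (2.71828:ℝ) < Real.exp t := by
        have h1 := Real.exp_one_gt_d9
        have h2 : Real.exp 1 ≤ Real.exp t := Real.exp_le_exp.mpr ht1.le
        linarith
      have hE'04 : Real.exp (-t) < 0.4 := by nlinarith
      simp only [hS, hC, hS1, hC1, hS2, hC2]
      have hεa : ε * F t ≤ ε := by nlinarith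
      have hS1nn : (0:ℝ) ≤ Real.exp t + (F t - F1 t) * Real.exp (-t) := by
        nlinarith [mul_nonneg (show (0:ℝ) ≤ F t - F1 t by linarith) hE'pos.le]
      have hC1nn : (0:ℝ) ≤ Real.exp t + (F1 t - F t) * Real.exp (-t) := by
        nlinarith [mul_le_mul_of_nonneg_right (show (-2:ℝ) ≤ F1 t - F t by linarith) hE'pos.le]
      have hC1leC : Real.exp t + (F1 t - F t) * Real.exp (-t) ≤
          Real.exp t + F t * Real.exp (-t) := by
        nlinarith [mul_le_mul_of_nonneg_right (show F1 t - F t ≤ F t by linarith) hE'pos.le]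
      refine ⟨?_, ?_, ⟨?_, ?_⟩, ⟨?_, ?_⟩, ⟨?_, ?_⟩, ?_⟩
      · nlinarith [mul_le_mul_of_nonneg_right ha1 hE'pos.le]
      · nlinarith [mul_nonneg ha0 hE'pos.le]
      · nlinarith [mul_le_mul_of_nonneg_right
          (show F2 t - 2 * F1 t + F t ≤ 4 by linarith) hE'pos.le]
      · nlinarith [mul_le_mul_of_nonneg_right
          (show ε * F t + 2 * F1 t - F2 t ≤ 2 * ε by linarith) hE'pos.le,
          mul_le_mul_of_nonneg_left (show 2 * Real.exp (-t) ≤ Real.exp t by linarith) hε.le]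
      · nlinarith [mul_le_mul_of_nonneg_right
          (show (-1:ℝ) ≤ F2 t - 2 * F1 t + F t by linarith) hE'pos.le]
      · nlinarith [mul_le_mul_of_nonneg_right
          (show F2 t - 2 * F1 t ≤ 3 * ε by linarith) hE'pos.le,
          mul_le_mul_of_nonneg_left (show 3 * Real.exp (-t) ≤ Real.exp t by linarith) hε.le,
          mul_nonneg (mul_nonneg hε.le ha0) hE'pos.le]
      · nlinarith [mul_nonneg hS1nn hC1nn]
      · have hsq : F t ^ 2 ≤ (F t - F1 t) ^ 2 := by
          nlinarith [mul_nonneg ha0 (neg_nonneg.mpr hb2), sq_nonneg (F1 t)]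
        nlinarith [mul_le_mul_of_nonneg_right hsq
          (mul_nonneg hE'pos.le hE'pos.le), hEE]
      · exact pow_le_pow_left₀ (by linarith) (by linarith) 2
end

section
/- For every ε with 0 < ε ≤ 1 there exist a real number t₀ > 1 and a smooth function c : ℝ → ℝ such that: c is even (c(−t) = c(t) for all t); c(t) > 0 for all t; c''(t) > 0 for all t; c'(t) = c(t) for all t ≥ t₀; and for all t one has c''(t) ≤ (1 + ε)·c(t) and c'(t)² ≤ c(t)². -/
open Real Set Filter Topology

noncomputable def psiAux (s : ℝ) : ℝ :=
  (expNegInvGlue (1+s) - expNegInvGlue (1-s)) / (expNegInvGlue (1+s) + expNegInvGlue (1-s))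

lemma psiAux_denom_pos (s : ℝ) : 0 < expNegInvGlue (1+s) + expNegInvGlue (1-s) := by
  rcases le_or_gt 0 s with h | h
  · have := expNegInvGlue.pos_of_pos (show (0:ℝ) < 1 + s by linarith)
    have := expNegInvGlue.nonneg (1 - s); linarith
  · have := expNegInvGlue.pos_of_pos (show (0:ℝ) < 1 - s by linarith)
    have := expNegInvGlue.nonneg (1 + s); linarith

lemma expNegInvGlue_eq {x : ℝ} (hx : 0 < x) : expNegInvGlue x = exp (-x⁻¹) := by
  rw [expNegInvGlue, if_neg (not_le.2 hx)]

lemma expNegInvGlue_mono : Monotone expNegInvGlue := by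
  intro x y hxy
  rcases le_or_gt y 0 with hy | hy
  · rw [expNegInvGlue.zero_of_nonpos (hxy.trans hy), expNegInvGlue.zero_of_nonpos hy]
  rcases le_or_gt x 0 with hx | hx
  · rw [expNegInvGlue.zero_of_nonpos hx]; exact expNegInvGlue.nonneg y
  · rw [expNegInvGlue_eq hx, expNegInvGlue_eq hy]
    exact exp_le_exp.2 (by simpa using inv_anti₀ hx hxy)

lemma psiAux_contDiff : ContDiff ℝ (⊤ : ℕ∞) psiAux := by
  have h1 : ContDiff ℝ (⊤ : ℕ∞) (fun s : ℝ => expNegInvGlue (1+s)) :=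
    expNegInvGlue.contDiff.comp (contDiff_const.add contDiff_id)
  have h2 : ContDiff ℝ (⊤ : ℕ∞) (fun s : ℝ => expNegInvGlue (1-s)) :=
    expNegInvGlue.contDiff.comp (contDiff_const.sub contDiff_id)
  exact (h1.sub h2).div (h1.add h2) fun s => (psiAux_denom_pos s).ne'

lemma psiAux_odd (s : ℝ) : psiAux (-s) = - psiAux s := by
  unfold psiAux
  rw [show 1 + -s = 1 - s by ring, show 1 - -s = 1 + s by ring, ← neg_div, neg_sub]
  ring

lemma psiAux_sq_le_one (s : ℝ) : psiAux s ^ 2 ≤ 1 := by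
  unfold psiAux
  rw [div_pow, div_le_one (by have := psiAux_denom_pos s; positivity)]
  have h1 := expNegInvGlue.nonneg (1 + s)
  have h2 := expNegInvGlue.nonneg (1 - s)
  nlinarith [mul_nonneg h1 h2]

lemma psiAux_eq_one {s : ℝ} (hs : 1 ≤ s) : psiAux s = 1 := by
  unfold psiAux
  rw [expNegInvGlue.zero_of_nonpos (show 1 - s ≤ 0 by linarith), sub_zero, add_zero,
    div_self (expNegInvGlue.pos_of_pos (show (0:ℝ) < 1 + s by linarith)).ne']

lemma psiAux_zero : psiAux 0 = 0 := by
  unfold psiAux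
  rw [show (1:ℝ) - 0 = 1 + 0 by ring, sub_self, zero_div]

lemma psiAux_pos {s : ℝ} (hs : 0 < s) : 0 < psiAux s := by
  have hlt : expNegInvGlue (1 - s) < expNegInvGlue (1 + s) := by
    rcases le_or_gt (1 - s) 0 with h | h
    · rw [expNegInvGlue.zero_of_nonpos h]
      exact expNegInvGlue.pos_of_pos (by linarith)
    · rw [expNegInvGlue_eq h, expNegInvGlue_eq (show (0:ℝ) < 1 + s by linarith)]
      refine exp_lt_exp.2 ?_
      have : (1 + s)⁻¹ < (1 - s)⁻¹ := by
        apply inv_strictAnti₀ h; linarith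
      linarith
  exact div_pos (by linarith) (psiAux_denom_pos s)

lemma psiAux_mono : Monotone psiAux := by
  intro s t hst
  have ha : expNegInvGlue (1 + s) ≤ expNegInvGlue (1 + t) := expNegInvGlue_mono (by linarith)
  have hb : expNegInvGlue (1 - t) ≤ expNegInvGlue (1 - s) := expNegInvGlue_mono (by linarith)
  have ha0 := expNegInvGlue.nonneg (1 + s)
  have hb0 := expNegInvGlue.nonneg (1 - t)
  rw [psiAux, psiAux, div_le_div_iff₀ (psiAux_denom_pos s) (psiAux_denom_pos t)]
  nlinarith [mul_le_mul ha hb hb0 (expNegInvGlue.nonneg (1+t))]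

lemma hasDerivAt_psiAux_zero : HasDerivAt psiAux 1 0 := by
  have hA : HasDerivAt (fun s : ℝ => exp (-(1+s)⁻¹)) (exp (-(1:ℝ)⁻¹)) 0 := by
    have h1 : HasDerivAt (fun s : ℝ => 1 + s) 1 0 := (hasDerivAt_id 0).const_add 1
    have h3 := ((h1.inv (by norm_num)).neg).exp
    convert h3 using 1 <;> norm_num
  have hB : HasDerivAt (fun s : ℝ => exp (-(1-s)⁻¹)) (-exp (-(1:ℝ)⁻¹)) 0 := by
    have h1 : HasDerivAt (fun s : ℝ => 1 - s) (-1) 0 := (hasDerivAt_id 0).const_sub 1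
    have h3 := ((h1.inv (by norm_num)).neg).exp
    convert h3 using 1 <;> norm_num
  have hg : HasDerivAt
      (fun s : ℝ => (exp (-(1+s)⁻¹) - exp (-(1-s)⁻¹)) / (exp (-(1+s)⁻¹) + exp (-(1-s)⁻¹))) 1 0 := by
    have hden : exp (-(1+(0:ℝ))⁻¹) + exp (-(1-(0:ℝ))⁻¹) ≠ 0 := by positivity
    have := (hA.sub hB).div (hA.add hB) hden
    refine this.congr_deriv ?_
    have h0 : exp (-(1:ℝ)⁻¹) ≠ 0 := exp_ne_zero _
    simp only [Pi.add_apply, Pi.sub_apply, add_zero, sub_zero]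
    field_simp
    ring
  refine hg.congr_of_eventuallyEq ?_
  have hmem : Ioo (-1 : ℝ) 1 ∈ 𝓝 (0:ℝ) := Ioo_mem_nhds (by norm_num) (by norm_num)
  filter_upwards [hmem] with s hs
  rw [psiAux, expNegInvGlue_eq (show (0:ℝ) < 1 + s by linarith [hs.1]),
    expNegInvGlue_eq (show (0:ℝ) < 1 - s by linarith [hs.2])]

lemma monotone_deriv_nonneg {f : ℝ → ℝ} (hm : Monotone f) {x : ℝ}
    (hd : DifferentiableAt ℝ f x) : 0 ≤ deriv f x := by
  have h := hd.hasDerivAt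
  rw [hasDerivAt_iff_tendsto_slope] at h
  refine ge_of_tendsto h ?_
  filter_upwards [self_mem_nhdsWithin] with y hy
  rcases lt_or_gt_of_ne (Ne.symm hy) with h1 | h1
  · rw [slope_def_field]
    exact div_nonneg (by simpa using hm h1.le) (by linarith)
  · rw [slope_def_field]
    rw [div_nonneg_iff]
    exact Or.inr ⟨by simpa using hm h1.le, by linarith⟩

lemma deriv_psiAux_zero_of_abs {s : ℝ} (hs : 1 < |s|) : deriv psiAux s = 0 := by
  rcases lt_abs.mp hs with h | h
  · have : psiAux =ᶠ[𝓝 s] fun _ => 1 := by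
      filter_upwards [Ioi_mem_nhds h] with y hy
      exact psiAux_eq_one (le_of_lt hy)
    rw [this.deriv_eq, deriv_const]
  · have h' : s < -1 := by linarith
    have : psiAux =ᶠ[𝓝 s] fun _ => -1 := by
      filter_upwards [Iio_mem_nhds h'] with y hy
      have : psiAux (-(-y)) = - psiAux (-y) := psiAux_odd (-y)
      rw [neg_neg] at this
      rw [this, psiAux_eq_one (by have := mem_Iio.mp hy; linarith : (1:ℝ) ≤ -y)]
    rw [this.deriv_eq, deriv_const]

/-- Analytic lemma of the doubling construction: for every `0 < ε ≤ 1` there are `t₀ > 1`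
and a smooth, even, positive, strictly convex function `c : ℝ → ℝ` with `c'(t) = c(t)` for
`t ≥ t₀`, satisfying `c''(t) ≤ (1+ε)·c(t)` and `c'(t)² ≤ c(t)²` for all `t`. -/
theorem stmt_15 : ∀ ε : ℝ, 0 < ε → ε ≤ 1 →
    ∃ t₀ : ℝ, 1 < t₀ ∧ ∃ c : ℝ → ℝ, ContDiff ℝ (⊤ : ℕ∞) c ∧
      (∀ t, c (-t) = c t) ∧
      (∀ t, 0 < c t) ∧
      (∀ t, 0 < deriv (deriv c) t) ∧
      (∀ t ≥ t₀, deriv c t = c t) ∧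
      (∀ t, deriv (deriv c) t ≤ (1 + ε) * c t ∧ (deriv c t) ^ 2 ≤ (c t) ^ 2) := by
  intro ε hε hε1
  have hdiffψ : Differentiable ℝ psiAux := psiAux_contDiff.differentiable (by simp)
  have hcontψ' : Continuous (deriv psiAux) := psiAux_contDiff.continuous_deriv (by exact_mod_cast le_top)
  obtain ⟨x₀, hx₀, hmax⟩ := isCompact_Icc.exists_isMaxOn
    (Set.nonempty_Icc.2 (by norm_num : (-2:ℝ) ≤ 2)) hcontψ'.continuousOn
  set K := max (deriv psiAux x₀) 1 with hK
  have hK1 : (1:ℝ) ≤ K := le_max_right _ _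
  have hK0 : (0:ℝ) < K := by linarith
  have hKbound : ∀ s, deriv psiAux s ≤ K := by
    intro s
    rcases le_or_gt |s| 2 with h | h
    · have := abs_le.mp h
      exact le_trans (hmax (mem_Icc.2 ⟨this.1, this.2⟩)) (le_max_left _ _)
    · rw [deriv_psiAux_zero_of_abs (by linarith)]; linarith
  set t₀ := 2 * K / ε with ht₀def
  have ht₀pos : 0 < t₀ := by positivity
  have ht₀2 : 2 ≤ t₀ := by
    rw [ht₀def, le_div_iff₀ hε]; nlinarith
  refine ⟨t₀, by linarith, ?_⟩
  set φ := fun t : ℝ => psiAux (t / t₀) with hφdef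
  have φsmooth : ContDiff ℝ (⊤ : ℕ∞) φ := psiAux_contDiff.comp (contDiff_id.div_const t₀)
  have φcont : Continuous φ := φsmooth.continuous
  have hφd : ∀ t, HasDerivAt φ (deriv psiAux (t / t₀) * (1/t₀)) t := by
    intro t
    have h1 : HasDerivAt (fun x : ℝ => x / t₀) (1/t₀) t := (hasDerivAt_id t).div_const t₀
    exact (hdiffψ (t / t₀)).hasDerivAt.comp t h1
  have hφ'0 : ∀ t, 0 ≤ deriv psiAux (t / t₀) * (1/t₀) := fun t =>
    mul_nonneg (monotone_deriv_nonneg psiAux_mono (hdiffψ _)) (by positivity)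
  have hφ'ε : ∀ t, deriv psiAux (t / t₀) * (1/t₀) ≤ ε := by
    intro t
    have h1 : deriv psiAux (t / t₀) * (1/t₀) ≤ K * (1/t₀) :=
      mul_le_mul_of_nonneg_right (hKbound _) (by positivity)
    have h2 : K * (1/t₀) = ε / 2 := by
      rw [ht₀def]; field_simp
    rw [h2] at h1; linarith
  have hφsq : ∀ t, φ t ^ 2 ≤ 1 := fun t => psiAux_sq_le_one _
  have hφodd : ∀ t, φ (-t) = - φ t := by
    intro t; rw [hφdef]; simp only; rw [neg_div, psiAux_odd]
  -- the antiderivative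
  set h := fun t : ℝ => ∫ s in (0:ℝ)..t, φ s with hhdef
  have hhd : ∀ t, HasDerivAt h (φ t) t := by
    intro t
    exact intervalIntegral.integral_hasDerivAt_right (φcont.intervalIntegrable _ _)
      (φcont.stronglyMeasurableAtFilter _ _) φcont.continuousAt
  have hderivh : deriv h = φ := funext fun t => (hhd t).deriv
  have hcd : ContDiff ℝ (⊤ : ℕ∞) h := by
    rw [show ((⊤ : ℕ∞) : WithTop ℕ∞) = (⊤ : ℕ∞) from rfl, contDiff_infty_iff_deriv]
    exact ⟨fun t => (hhd t).differentiableAt, hderivh ▸ φsmooth⟩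
  have hheven : ∀ t, h (-t) = h t := by
    intro t
    have h1 : (∫ x in (0:ℝ)..t, φ (-x)) = ∫ x in (-t)..(-(0:ℝ)), φ x :=
      intervalIntegral.integral_comp_neg φ
    have h2 : (∫ x in (0:ℝ)..t, φ (-x)) = - h t := by
      rw [hhdef]
      simp only [hφodd]
      exact intervalIntegral.integral_neg
    have h3 : (∫ x in (-t)..(-(0:ℝ)), φ x) = - h (-t) := by
      rw [neg_zero, hhdef]
      exact intervalIntegral.integral_symm _ _
    rw [h2, h3] at h1
    linarith
  -- the function c
  set c := fun t : ℝ => exp (h t) with hcdef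
  have hc1 : ∀ t, HasDerivAt c (exp (h t) * φ t) t := fun t => (hhd t).exp
  have hderivc : deriv c = fun t => exp (h t) * φ t := funext fun t => (hc1 t).deriv
  have hderiv2 : ∀ t, deriv (deriv c) t
      = exp (h t) * φ t * φ t + exp (h t) * (deriv psiAux (t / t₀) * (1/t₀)) := by
    intro t
    rw [hderivc]
    exact ((hc1 t).mul (hφd t)).deriv
  refine ⟨c, Real.contDiff_exp.comp hcd, ?_, fun t => exp_pos _, ?_, ?_, ?_⟩
  · intro t
    show exp (h (-t)) = exp (h t)
    rw [hheven]
  · -- strict convexity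
    intro t
    rw [hderiv2 t]
    have hct : 0 < exp (h t) := exp_pos _
    rcases eq_or_ne t 0 with rfl | ht
    · have hd0 : deriv psiAux (0 / t₀) = 1 := by
        rw [zero_div]; exact hasDerivAt_psiAux_zero.deriv
      rw [hd0]
      have hφ0 : φ 0 = 0 := by rw [hφdef]; simp only [zero_div]; exact psiAux_zero
      rw [hφ0]
      have : 0 < 1 / t₀ := by positivity
      nlinarith
    · have hφne : φ t ≠ 0 := by
        rcases lt_or_gt_of_ne ht with h1 | h1
        · have hpos : 0 < φ (-t) := by
            rw [hφdef]; simp only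
            exact psiAux_pos (div_pos (by linarith) ht₀pos)
          rw [hφodd] at hpos
          intro hzero; rw [hzero] at hpos; simp at hpos
        · exact (psiAux_pos (div_pos (by linarith) ht₀pos)).ne'
      have h1 : 0 < φ t * φ t := by
        rcases lt_or_gt_of_ne hφne with h2 | h2
        · exact mul_pos_of_neg_of_neg h2 h2
        · exact mul_pos h2 h2
      nlinarith [hφ'0 t]
  · -- deriv c = c for t ≥ t₀
    intro t ht
    rw [hderivc]
    have hφ1 : φ t = 1 := by
      rw [hφdef]; exact psiAux_eq_one ((one_le_div ht₀pos).2 ht)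
    show exp (h t) * φ t = exp (h t)
    rw [hφ1, mul_one]
  · -- the two inequalities
    intro t
    have hct : 0 < exp (h t) := exp_pos _
    constructor
    · rw [hderiv2 t]
      have h1 := hφsq t
      have h2 := hφ'ε t
      show _ ≤ (1 + ε) * exp (h t)
      nlinarith
    · rw [hderivc]
      have h1 := hφsq t
      show (exp (h t) * φ t) ^ 2 ≤ exp (h t) ^ 2
      nlinarith
end
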